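/- Let M be a metrizable topological space and X ⊆ M any subset. Then the space M(X) is paracompact, where M(X) is the set M equipped with the topology generated by the open sets of M together with the singletons {x} for x ∈ X. -/

import Mathlib

open Topology

open Topology

def michael {M : Type*} (t : TopologicalSpace M) (X : Set M) : TopologicalSpace M :=
  TopologicalSpace.generateFrom ({U | IsOpen[t] U} ∪ {S | ∃ x ∈ X, S = {x}})

lemma michael_isOpen_of {M : Type*} {t : TopologicalSpace M} {X : Set M} {U : Set M}
    (hU : IsOpen[t] U) : IsOpen[michael t X] U :=
  TopologicalSpace.GenerateOpen.basic U (Or.inl hU)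

lemma michael_singleton {M : Type*} {t : TopologicalSpace M} {X : Set M} {x : M}
    (hx : x ∈ X) : IsOpen[michael t X] {x} :=
  TopologicalSpace.GenerateOpen.basic _ (Or.inr ⟨x, hx, rfl⟩)

lemma michael_diff_subset {M : Type*} {t : TopologicalSpace M} {X : Set M} {s : Set M}
    (h : IsOpen[michael t X] s) : s \ X ⊆ @interior M t s := by
  induction h with
  | basic u hu =>
      rcases hu with hu | ⟨x, hx, rfl⟩
      · rw [hu.interior_eq]; exact Set.diff_subset
      · intro y ⟨hy, hyX⟩
        simp only [Set.mem_singleton_iff] at hy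
        exact absurd (hy ▸ hx) hyX
  | univ => simp
  | inter a b _ _ iha ihb =>
      intro y hy
      rw [interior_inter]
      exact ⟨iha ⟨hy.1.1, hy.2⟩, ihb ⟨hy.1.2, hy.2⟩⟩
  | sUnion S _ ih =>
      rintro y ⟨⟨s, hsS, hys⟩, hyX⟩
      exact interior_mono (Set.subset_sUnion_of_mem hsS) (ih s hsS ⟨hys, hyX⟩)

lemma michael_le {M : Type*} (t : TopologicalSpace M) (X : Set M) : michael t X ≤ t :=
  fun _ hs => michael_isOpen_of hs

/-- If `M` is metrizable, then `M(X)` is paracompact for any `X ⊆ M`. -/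
theorem stmt7 {M : Type*} [t : TopologicalSpace M] [TopologicalSpace.MetrizableSpace M]
    (X : Set M) :
    @ParacompactSpace M (michael t X) := by
  refine @ParacompactSpace.mk M (michael t X) fun α u hu hcov => ?_
  set V : α → Set M := fun a => interior (u a) with hV
  set W : Set M := ⋃ a, V a with hWdef
  have hWopen : IsOpen W := isOpen_iUnion fun a => isOpen_interior
  have hWX : Wᶜ ⊆ X := by
    intro m hm
    by_contra hmX
    obtain ⟨a, hma⟩ := Set.iUnion_eq_univ_iff.mp hcov m
    exact hm (Set.mem_iUnion.mpr ⟨a, michael_diff_subset (hu a) ⟨hma, hmX⟩⟩)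
  letI : MetricSpace M := TopologicalSpace.metrizableSpaceMetric M
  haveI : ParacompactSpace ↥W := inferInstance
  obtain ⟨β, v, hvo, hvcov, hvlf, hvref⟩ :=
    ParacompactSpace.locallyFinite_refinement
      (X := ↥W) α (fun a => Subtype.val ⁻¹' V a)
      (fun a => (isOpen_interior).preimage continuous_subtype_val)
      (by
        ext ⟨m, hm⟩
        simpa using Set.mem_iUnion.mp hm)
  classical
  refine ⟨β ⊕ ↥(Wᶜ), Sum.elim (fun b => Subtype.val '' v b)
      (fun (x : ↥(Wᶜ)) => ({(x : M)} : Set M)), ?_, ?_, ?_, ?_⟩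
  · rintro (b | x)
    · exact michael_isOpen_of (hWopen.isOpenMap_subtype_val _ (hvo b))
    · exact michael_singleton (hWX x.2)
  · rw [Set.eq_univ_iff_forall]
    intro m
    by_cases hm : m ∈ W
    · obtain ⟨b, hb⟩ := Set.iUnion_eq_univ_iff.mp hvcov ⟨m, hm⟩
      exact Set.mem_iUnion.mpr ⟨Sum.inl b, ⟨m, hm⟩, hb, rfl⟩
    · exact Set.mem_iUnion.mpr ⟨Sum.inr ⟨m, hm⟩, rfl⟩
  · intro m
    by_cases hm : m ∈ W
    · obtain ⟨N₀, hN₀, hfin⟩ := hvlf ⟨m, hm⟩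
      refine ⟨Subtype.val '' N₀,
        nhds_mono (michael_le t X) (hWopen.isOpenMap_subtype_val.image_mem_nhds hN₀), ?_⟩
      refine ((hfin.image Sum.inl).subset ?_)
      rintro (b | x) hi
      · obtain ⟨y, ⟨z, hzv, rfl⟩, ⟨w, hwN, hwz⟩⟩ := hi
        exact ⟨b, ⟨z, hzv, (Subtype.val_injective hwz).symm ▸ hwN⟩, rfl⟩
      · obtain ⟨y, hy1, ⟨w, _, hwy⟩⟩ := hi
        simp only [Sum.elim_inr, Set.mem_singleton_iff] at hy1
        exact absurd (hy1 ▸ hwy ▸ w.2) x.2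
    · refine ⟨{m}, @IsOpen.mem_nhds M (michael t X) m {m} (michael_singleton (hWX hm)) rfl, ?_⟩
      refine (Set.finite_singleton (Sum.inr ⟨m, hm⟩)).subset ?_
      rintro (b | x) hi
      · obtain ⟨y, ⟨w, _, hwy⟩, hy2⟩ := hi
        simp only [Set.mem_singleton_iff] at hy2
        exact absurd (hy2 ▸ hwy ▸ w.2) hm
      · obtain ⟨y, hy1, hy2⟩ := hi
        simp only [Sum.elim_inr, Set.mem_singleton_iff] at hy1
        simp only [Set.mem_singleton_iff] at hy2
        simp only [Set.mem_singleton_iff, Sum.inr.injEq]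
        exact Subtype.ext (hy1 ▸ hy2)
  · rintro (b | x)
    · obtain ⟨a, ha⟩ := hvref b
      exact ⟨a, by
        rintro y ⟨z, hz, rfl⟩
        exact interior_subset (ha hz)⟩
    · obtain ⟨a, ha⟩ := Set.iUnion_eq_univ_iff.mp hcov x
      exact ⟨a, Set.singleton_subset_iff.mpr ha⟩
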